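/- arXiv:2308.13238 — 2 statements merged into one kernel-verified Lean document; each statement's English description precedes it below -/
import Mathlib

section
/- The Weyl–Zak transform Z_W acts on twisted translates via Z_W(T^t_{(k,l)}φ)(ξ,ξ',η) = e^{2πi(k·ξ + l·ξ')} e^{πi k·l} Z_W φ(ξ,ξ',η), for k,l ∈ ℤⁿ, ξ,ξ' ∈ 𝕋ⁿ, η ∈ ℝⁿ. -/
open MeasureTheory Complex
noncomputable section

abbrev Rn (n : ℕ) := Fin n → ℝ

def dot {n : ℕ} (x y : Rn n) : ℝ := ∑ i, x i * y i

def zc {n : ℕ} (k : Fin n → ℤ) : Rn n := fun i => (k i : ℝ)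

/-- Twisted translation at the level of functions on ℝⁿ × ℝⁿ. -/
def Ttw {n : ℕ} (k l : Fin n → ℤ) (f : Rn n × Rn n → ℂ) : Rn n × Rn n → ℂ :=
  fun p => Complex.exp (Real.pi * I * (dot p.1 (zc l) - dot p.2 (zc k))) *
    f (p.1 - zc k, p.2 - zc l)

/-- Kernel of the Weyl transform. -/
def weylKernel {n : ℕ} (g : Rn n × Rn n → ℂ) (ξ η : Rn n) : ℂ :=
  ∫ x : Rn n, g (x, η - ξ) * Complex.exp (Real.pi * I * dot x (ξ + η))

/-- The Weyl–Zak transform. -/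
def zakW {n : ℕ} (g : Rn n × Rn n → ℂ) (ξ ξ' η : Rn n) : ℂ :=
  ∑' m : Fin n → ℤ, weylKernel g (zc m + ξ) η * Complex.exp (-(2 * Real.pi) * I * dot (zc m) ξ')

/-- The bracket map. -/
def bracket {n : ℕ} (g h : Rn n × Rn n → ℂ) (p : Rn n × Rn n) : ℂ :=
  ∫ η : Rn n, zakW g p.1 p.2 η * (starRingEnd ℂ) (zakW h p.1 p.2 η)

/-- L²(ℝ²ⁿ). -/
abbrev H (n : ℕ) : Type := Lp ℂ 2 (volume : Measure (Rn n × Rn n))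

/-- Fundamental domain of the torus 𝕋ⁿ. -/
def Q (n : ℕ) : Set (Rn n) := Set.univ.pi fun _ => Set.Ico (0:ℝ) 1

/-- Lebesgue measure on 𝕋ⁿ × 𝕋ⁿ modelled on a fundamental domain. -/
def μT (n : ℕ) : Measure (Rn n × Rn n) := volume.restrict ((Q n) ×ˢ (Q n))

/-- L²(ℝⁿ). -/
abbrev L2Rn (n : ℕ) : Type := Lp ℂ 2 (volume : Measure (Rn n))

/-- L²(𝕋ⁿ×𝕋ⁿ, L²(ℝⁿ)). -/
abbrev HT (n : ℕ) : Type := Lp (L2Rn n) 2 (μT n)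

/-- A family of bounded operators on L²(ℝ²ⁿ) realizing the twisted translations. -/
def IsTTF {n : ℕ} (Tt : (Fin n → ℤ) → (Fin n → ℤ) → H n →L[ℂ] H n) : Prop :=
  ∀ (k l : Fin n → ℤ) (f : H n), (Tt k l f : Rn n × Rn n → ℂ) =ᵐ[volume] Ttw k l ⇑f

/-- The principal twisted shift-invariant space V^t(φ). -/
def Vt {n : ℕ} (Tt : (Fin n → ℤ) → (Fin n → ℤ) → H n →L[ℂ] H n) (φ : H n) :
    Submodule ℂ (H n) :=
  (Submodule.span ℂ {g : H n | ∃ k l, g = Tt k l φ}).topologicalClosure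

/-- φ is a Parseval frame generator of V^t(φ). -/
def IsParsevalGen {n : ℕ} (Tt : (Fin n → ℤ) → (Fin n → ℤ) → H n →L[ℂ] H n) (φ : H n) : Prop :=
  ∀ f ∈ Vt Tt φ, ∑' kl : (Fin n → ℤ) × (Fin n → ℤ),
    ‖(inner ℂ f (Tt kl.1 kl.2 φ) : ℂ)‖ ^ 2 = ‖f‖ ^ 2

/-- Modulation factor e^{2πi(k·ξ+l·ξ')} e^{πi k·l}. -/
def modFactor {n : ℕ} (k l : Fin n → ℤ) (p : Rn n × Rn n) : ℂ :=
  Complex.exp (2 * Real.pi * I * (dot (zc k) p.1 + dot (zc l) p.2)) *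
    Complex.exp (Real.pi * I * dot (zc k) (zc l))

/-- J is the isometric isomorphism 𝒥 induced by the Weyl–Zak transform:
it intertwines twisted translations with modulations. -/
def IsZakIsom {n : ℕ} (Tt : (Fin n → ℤ) → (Fin n → ℤ) → H n →L[ℂ] H n)
    (J : H n ≃ₗᵢ[ℂ] HT n) : Prop :=
  ∀ (k l : Fin n → ℤ) (f : H n),
    (J (Tt k l f) : Rn n × Rn n → L2Rn n) =ᵐ[μT n]
      fun p => modFactor k l p • (J f : Rn n × Rn n → L2Rn n) p


lemma dot_comm {n : ℕ} (x y : Rn n) : dot x y = dot y x := by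
  simp [dot, mul_comm]

lemma dot_add_left {n : ℕ} (x y z : Rn n) : dot (x + y) z = dot x z + dot y z := by
  simp [dot, add_mul, Finset.sum_add_distrib]

lemma dot_sub_left {n : ℕ} (x y z : Rn n) : dot (x - y) z = dot x z - dot y z := by
  simp [dot, sub_mul, Finset.sum_sub_distrib]

lemma dot_add_right {n : ℕ} (x y z : Rn n) : dot x (y + z) = dot x y + dot x z := by
  simp [dot, mul_add, Finset.sum_add_distrib]

lemma dot_sub_right {n : ℕ} (x y z : Rn n) : dot x (y - z) = dot x y - dot x z := by
  simp [dot, mul_sub, Finset.sum_sub_distrib]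

lemma zc_add {n : ℕ} (a b : Fin n → ℤ) : zc (a + b) = zc a + zc b := by
  funext i; simp [zc]

lemma weylKernel_Ttw {n : ℕ} (k l : Fin n → ℤ) (φ : Rn n × Rn n → ℂ) (ξ η : Rn n) :
    weylKernel (Ttw k l φ) ξ η =
      Complex.exp (2 * Real.pi * I * dot (zc k) ξ + Real.pi * I * dot (zc k) (zc l)) *
        weylKernel φ (ξ + zc l) η := by
  unfold weylKernel
  calc ∫ x : Rn n, Ttw k l φ (x, η - ξ) * Complex.exp (Real.pi * I * dot x (ξ + η))
      = ∫ x : Rn n, Ttw k l φ (x + zc k, η - ξ) *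
          Complex.exp (Real.pi * I * dot (x + zc k) (ξ + η)) :=
        (MeasureTheory.integral_add_right_eq_self
          (fun x : Rn n => Ttw k l φ (x, η - ξ) *
            Complex.exp (Real.pi * I * dot x (ξ + η))) (zc k)).symm
    _ = ∫ x : Rn n, Complex.exp (2 * Real.pi * I * dot (zc k) ξ +
          Real.pi * I * dot (zc k) (zc l)) *
          (φ (x, η - (ξ + zc l)) * Complex.exp (Real.pi * I * dot x ((ξ + zc l) + η))) := by
        congr 1
        funext x
        unfold Ttw
        simp only [add_sub_cancel_right, sub_sub]
        have hexp : Complex.exp (Real.pi * I * (dot (x + zc k) (zc l) - dot (η - ξ) (zc k))) *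
            Complex.exp (Real.pi * I * dot (x + zc k) (ξ + η)) =
            Complex.exp (2 * Real.pi * I * dot (zc k) ξ + Real.pi * I * dot (zc k) (zc l)) *
              Complex.exp (Real.pi * I * dot x ((ξ + zc l) + η)) := by
          rw [← Complex.exp_add, ← Complex.exp_add]
          congr 1
          push_cast [dot_add_left, dot_add_right, dot_sub_left, dot_sub_right,
            dot_comm η (zc k), dot_comm ξ (zc k)]
          ring
        linear_combination (φ (x, η - (ξ + zc l))) * hexp
    _ = Complex.exp (2 * Real.pi * I * dot (zc k) ξ + Real.pi * I * dot (zc k) (zc l)) *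
          ∫ x : Rn n, φ (x, η - (ξ + zc l)) *
            Complex.exp (Real.pi * I * dot x ((ξ + zc l) + η)) := by
        rw [MeasureTheory.integral_const_mul]

/-- the Weyl–Zak transform of a twisted translate. -/
theorem zakW_twisted_translate (n : ℕ) (k l : Fin n → ℤ)
    (φ : Rn n × Rn n → ℂ) (hφ : Integrable φ (volume : Measure (Rn n × Rn n)))
    (ξ ξ' η : Rn n) :
    zakW (Ttw k l φ) ξ ξ' η =
      Complex.exp (2 * Real.pi * I * (dot (zc k) ξ + dot (zc l) ξ')) *
        Complex.exp (Real.pi * I * dot (zc k) (zc l)) * zakW φ ξ ξ' η := by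
  unfold zakW
  set C : ℂ := Complex.exp (2 * Real.pi * I * (dot (zc k) ξ + dot (zc l) ξ')) *
    Complex.exp (Real.pi * I * dot (zc k) (zc l)) with hC
  have hterm : ∀ m : Fin n → ℤ,
      weylKernel (Ttw k l φ) (zc m + ξ) η * Complex.exp (-(2 * Real.pi) * I * dot (zc m) ξ') =
      C * (weylKernel φ (zc (m + l) + ξ) η *
        Complex.exp (-(2 * Real.pi) * I * dot (zc (m + l)) ξ')) := by
    intro m
    rw [weylKernel_Ttw]
    have harg : zc m + ξ + zc l = zc (m + l) + ξ := by
      rw [zc_add]; ring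
    rw [harg]
    obtain ⟨z, hz⟩ : ∃ z : ℤ, dot (zc k) (zc m) = (z : ℝ) :=
      ⟨∑ i, k i * m i, by push_cast [dot, zc]; rfl⟩
    have hexp : Complex.exp (2 * Real.pi * I * dot (zc k) (zc m + ξ) +
          Real.pi * I * dot (zc k) (zc l)) *
        Complex.exp (-(2 * Real.pi) * I * dot (zc m) ξ') =
        C * Complex.exp (-(2 * Real.pi) * I * dot (zc (m + l)) ξ') := by
      rw [hC]
      calc Complex.exp (2 * Real.pi * I * dot (zc k) (zc m + ξ) +
              Real.pi * I * dot (zc k) (zc l)) *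
            Complex.exp (-(2 * Real.pi) * I * dot (zc m) ξ')
          = Complex.exp ((z : ℂ) * (2 * Real.pi * I)) *
            (Complex.exp (2 * Real.pi * I * (dot (zc k) ξ + dot (zc l) ξ')) *
              Complex.exp (Real.pi * I * dot (zc k) (zc l)) *
              Complex.exp (-(2 * Real.pi) * I * dot (zc (m + l)) ξ')) := by
            simp only [← Complex.exp_add]
            congr 1
            push_cast [dot_add_right, dot_add_left, zc_add, hz]
            ring
        _ = _ := by
            rw [Complex.exp_int_mul_two_pi_mul_I, one_mul]
    linear_combination (weylKernel φ (zc (m + l) + ξ) η) * hexp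
  rw [tsum_congr hterm, tsum_mul_left]
  congr 1
  simpa using (Equiv.addRight l).tsum_eq
    (fun m : Fin n → ℤ => weylKernel φ (zc m + ξ) η *
      Complex.exp (-(2 * Real.pi) * I * dot (zc m) ξ'))

end
end

section
/- Let φ ∈ L²(ℝ^{2n}) be a Parseval frame generator of V^t(φ) and let U : V^t(φ) → L²(ℝ^{2n}) be a bounded twisted shift preserving operator. Then for every m ∈ L²(𝕋ⁿ×𝕋ⁿ), (𝒥 ∘ U ∘ 𝒥⁻¹)(m·𝒥φ)(ξ,ξ') = m(ξ,ξ')·(𝒥 ∘ U)φ(ξ,ξ') for a.e. ξ,ξ' ∈ 𝕋ⁿ. -/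
open MeasureTheory Complex
noncomputable section

section JCLaux
open intervalIntegral Filter

namespace JCL
variable {n : ℕ}

lemma measurableSet_Q : MeasurableSet (Q n) :=
  MeasurableSet.univ_pi fun _ => measurableSet_Ico

lemma volume_Q : volume (Q n) = 1 := by
  rw [Q, volume_pi, Measure.pi_pi]
  simp [Real.volume_Ico]

lemma μT_eq_prod : μT n = ((volume : Measure (Rn n)).restrict (Q n)).prod
    ((volume : Measure (Rn n)).restrict (Q n)) := by
  rw [μT, Measure.prod_restrict, ← Measure.volume_eq_prod]

instance : IsProbabilityMeasure (μT n) := by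
  constructor
  rw [μT_eq_prod]
  simp [Measure.prod_apply, volume_Q]

-- one-variable character
def chF {n : ℕ} (a : Fin n → ℤ) (ξ : Rn n) : ℂ := Complex.exp (2 * Real.pi * I * (dot (zc a) ξ))

lemma integral_Ico_exp (a : ℤ) :
    (∫ t in Set.Ico (0:ℝ) 1, Complex.exp (2 * Real.pi * I * (a * t))) =
      if a = 0 then 1 else 0 := by
  split_ifs with h
  · simp only [h, Int.cast_zero, zero_mul, mul_zero, Complex.exp_zero]
    simp [Real.volume_Ico]
  · have hc : (2 * Real.pi * I * a) ≠ 0 := by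
      simp [Real.pi_ne_zero, Complex.I_ne_zero, Complex.ofReal_ne_zero, h]
    have h1 : (∫ t in Set.Ico (0:ℝ) 1, Complex.exp (2 * Real.pi * I * (a * t)))
        = ∫ t in (0:ℝ)..1, Complex.exp ((2 * Real.pi * I * a) * t) := by
      rw [intervalIntegral.integral_of_le zero_le_one,
        integral_Ico_eq_integral_Ioo, integral_Ioc_eq_integral_Ioo]
      congr 1; ext t; ring_nf
    have h2 : Complex.exp (2 * Real.pi * I * a * 1) = 1 := by
      rw [mul_one]
      have h3 := Complex.exp_int_mul_two_pi_mul_I a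
      rw [← h3]; congr 1; push_cast; ring
    rw [h1, integral_exp_mul_complex hc]
    push_cast
    rw [h2]
    simp

lemma integral_chF (a : Fin n → ℤ) :
    (∫ ξ, chF a ξ ∂((volume : Measure (Rn n)).restrict (Q n))) =
      if a = 0 then 1 else 0 := by
  have hprod : ∀ ξ : Rn n, chF a ξ = ∏ i, Complex.exp (2 * Real.pi * I * (a i * ξ i)) := by
    intro ξ
    rw [chF, ← Complex.exp_sum]
    congr 1
    rw [dot]
    push_cast [Finset.mul_sum]
    rfl
  have hind : ∀ ξ : Rn n,
      (Q n).indicator (fun ξ => chF a ξ) ξ =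
        ∏ i, (Set.Ico (0:ℝ) 1).indicator (fun t => Complex.exp (2 * Real.pi * I * (a i * t))) (ξ i) := by
    intro ξ
    by_cases hξ : ξ ∈ Q n
    · rw [Set.indicator_of_mem hξ, hprod]
      exact (Finset.prod_congr rfl fun i _ => by
        rw [Set.indicator_of_mem (hξ i (Set.mem_univ i))]).symm
    · rw [Set.indicator_of_notMem hξ]
      obtain ⟨i, hi⟩ : ∃ i, ξ i ∉ Set.Ico (0:ℝ) 1 := by
        by_contra hc; push_neg at hc; exact hξ fun i _ => hc i
      exact (Finset.prod_eq_zero (Finset.mem_univ i) (Set.indicator_of_notMem hi _)).symm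
  rw [← MeasureTheory.integral_indicator measurableSet_Q]
  rw [integral_congr_ae (Filter.EventuallyEq.of_eq (funext hind))]
  rw [volume_pi, MeasureTheory.integral_fintype_prod_eq_prod (ι := Fin n)
    (f := fun i t => (Set.Ico (0:ℝ) 1).indicator (fun u => Complex.exp (2 * Real.pi * I * (a i * u))) t)]
  have : ∀ i, (∫ t : ℝ, (Set.Ico (0:ℝ) 1).indicator
      (fun u => Complex.exp (2 * Real.pi * I * (a i * u))) t) = if a i = 0 then 1 else 0 := by
    intro i
    rw [MeasureTheory.integral_indicator measurableSet_Ico]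
    exact integral_Ico_exp (a i)
  simp_rw [this]
  by_cases h : a = 0
  · simp [h]
  · obtain ⟨i, hi⟩ := Function.ne_iff.1 h
    rw [Finset.prod_eq_zero (Finset.mem_univ i) (by simpa using hi)]
    simp [h]

end JCL

namespace JCL
variable {n : ℕ}

lemma continuous_dotzc (k : Fin n → ℤ) : Continuous fun ξ : Rn n => dot (zc k) ξ := by
  unfold dot
  exact continuous_finset_sum _ fun i _ => continuous_const.mul (continuous_apply i)

lemma continuous_modFactor (k l : Fin n → ℤ) : Continuous (modFactor k l (n := n)) := by
  unfold modFactor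
  refine (Complex.continuous_exp.comp ?_).mul continuous_const
  refine continuous_const.mul ?_
  exact ((Complex.continuous_ofReal.comp ((continuous_dotzc k).comp continuous_fst)).add
    (Complex.continuous_ofReal.comp ((continuous_dotzc l).comp continuous_snd)))

lemma norm_exp_real_mul_I (r s : ℝ) : ‖Complex.exp (r * I * s)‖ = 1 := by
  rw [Complex.norm_exp]
  have : (↑r * I * ↑s).re = 0 := by simp [Complex.mul_re, Complex.mul_im]
  rw [this, Real.exp_zero]

lemma norm_modFactor (k l : Fin n → ℤ) (p : Rn n × Rn n) : ‖modFactor k l p‖ = 1 := by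
  rw [modFactor, norm_mul]
  have h1 : (2:ℂ) * Real.pi * I * ((dot (zc k) p.1 : ℝ) + (dot (zc l) p.2 : ℝ))
      = (2 * Real.pi : ℝ) * I * ((dot (zc k) p.1 + dot (zc l) p.2 : ℝ)) := by push_cast; ring
  have h2 : (Real.pi : ℂ) * I * (dot (zc k) (zc l) : ℝ)
      = (Real.pi : ℝ) * I * ((dot (zc k) (zc l) : ℝ)) := by push_cast; ring
  rw [h1, h2, norm_exp_real_mul_I, norm_exp_real_mul_I, mul_one]

lemma memℒp_modFactor (k l : Fin n → ℤ) : MemLp (modFactor k l) 2 (μT n) :=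
  MemLp.of_bound ((continuous_modFactor k l).aestronglyMeasurable) 1
    (Filter.Eventually.of_forall fun p => le_of_eq (norm_modFactor k l p))

/-- characters as elements of L²(μT). -/
def chE (kl : (Fin n → ℤ) × (Fin n → ℤ)) : Lp ℂ 2 (μT n) :=
  (memℒp_modFactor kl.1 kl.2).toLp _

lemma zc_sub (a b : Fin n → ℤ) : zc (a - b) = zc a - zc b := by
  funext i; simp [zc]

lemma dot_sub_left (x y z : Rn n) : dot (x - y) z = dot x z - dot y z := by
  simp [dot, sub_mul, Finset.sum_sub_distrib]

lemma conj_mul_modFactor (k l k' l' : Fin n → ℤ) (p : Rn n × Rn n) :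
    (starRingEnd ℂ) (modFactor k l p) * modFactor k' l' p =
      Complex.exp (Real.pi * I * ((dot (zc k') (zc l') : ℝ) - (dot (zc k) (zc l) : ℝ))) *
        (chF (k' - k) p.1 * chF (l' - l) p.2) := by
  unfold modFactor chF
  rw [map_mul, ← Complex.exp_conj, ← Complex.exp_conj]
  simp only [map_mul, map_add, map_ofNat, Complex.conj_ofReal, Complex.conj_I]
  rw [zc_sub, zc_sub, dot_sub_left, dot_sub_left]
  simp only [← Complex.exp_add]
  congr 1
  push_cast
  ring

lemma inner_chE (kl kl' : (Fin n → ℤ) × (Fin n → ℤ)) :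
    (inner ℂ (chE kl) (chE kl') : ℂ) = if kl = kl' then 1 else 0 := by
  rw [L2.inner_def]
  have hae : ∀ᵐ p ∂(μT n),
      (inner ℂ ((chE kl : Lp ℂ 2 (μT n)) p) ((chE (n := n) kl') p) : ℂ) =
        (starRingEnd ℂ) (modFactor kl.1 kl.2 p) * modFactor kl'.1 kl'.2 p := by
    filter_upwards [MemLp.coeFn_toLp (memℒp_modFactor (n := n) kl.1 kl.2),
      MemLp.coeFn_toLp (memℒp_modFactor (n := n) kl'.1 kl'.2)] with p h1 h2
    rw [RCLike.inner_apply']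
    rw [chE, chE] at *
    rw [h1, h2]
  rw [integral_congr_ae hae]
  have : ∀ p : Rn n × Rn n, (starRingEnd ℂ) (modFactor kl.1 kl.2 p) * modFactor kl'.1 kl'.2 p =
      Complex.exp (Real.pi * I * ((dot (zc kl'.1) (zc kl'.2) : ℝ) - (dot (zc kl.1) (zc kl.2) : ℝ))) *
        (chF (kl'.1 - kl.1) p.1 * chF (kl'.2 - kl.2) p.2) :=
    conj_mul_modFactor kl.1 kl.2 kl'.1 kl'.2
  simp_rw [this]
  rw [MeasureTheory.integral_const_mul, μT_eq_prod]
  rw [MeasureTheory.integral_prod_mul (f := chF (kl'.1 - kl.1)) (g := chF (kl'.2 - kl.2))]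
  rw [integral_chF, integral_chF]
  by_cases h : kl = kl'
  · subst h
    simp [Complex.exp_zero]
  · have : kl'.1 - kl.1 ≠ 0 ∨ kl'.2 - kl.2 ≠ 0 := by
      by_contra hc
      push_neg at hc
      obtain ⟨h1, h2⟩ := hc
      exact h (Prod.ext (sub_eq_zero.1 h1).symm (sub_eq_zero.1 h2).symm)
    rcases this with h1 | h2
    · simp [if_neg h1, if_neg h]
    · simp [if_neg h2, if_neg h]

lemma orthonormal_chE : Orthonormal ℂ (chE (n := n)) :=
  orthonormal_iff_ite.2 fun kl kl' => inner_chE kl kl'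

end JCL

namespace JCL
variable {n : ℕ}

/-! ### The embedding into the torus in ℂⁿ × ℂⁿ -/

abbrev Xc (n : ℕ) := (Fin n → ℂ) × (Fin n → ℂ)

def eT (p : Rn n × Rn n) : Xc n :=
  (fun i => Complex.exp (2 * Real.pi * I * (p.1 i)), fun i => Complex.exp (2 * Real.pi * I * (p.2 i)))

def KT (n : ℕ) : Set (Xc n) := {z | (∀ i, ‖z.1 i‖ = 1) ∧ (∀ i, ‖z.2 i‖ = 1)}

lemma continuous_eT : Continuous (eT (n := n)) := by
  unfold eT
  exact (continuous_pi fun i => Complex.continuous_exp.comp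
      (continuous_const.mul (Complex.continuous_ofReal.comp
        ((continuous_apply i).comp continuous_fst)))).prodMk
    (continuous_pi fun i => Complex.continuous_exp.comp
      (continuous_const.mul (Complex.continuous_ofReal.comp
        ((continuous_apply i).comp continuous_snd))))

lemma norm_exp_two_pi (t : ℝ) : ‖Complex.exp (2 * Real.pi * I * t)‖ = 1 := by
  have : (2:ℂ) * Real.pi * I * t = ((2 * Real.pi : ℝ) : ℂ) * I * (t : ℝ) := by push_cast; ring
  rw [this, norm_exp_real_mul_I]

lemma eT_mem_KT (p : Rn n × Rn n) : eT p ∈ KT n :=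
  ⟨fun i => norm_exp_two_pi _, fun i => norm_exp_two_pi _⟩

lemma isClosed_KT : IsClosed (KT n) := by
  have e1 : {z : Xc n | ∀ i, ‖z.1 i‖ = 1} = ⋂ i, {z : Xc n | ‖z.1 i‖ = 1} := by
    ext z; simp [Set.mem_iInter]
  have e2 : {z : Xc n | ∀ i, ‖z.2 i‖ = 1} = ⋂ i, {z : Xc n | ‖z.2 i‖ = 1} := by
    ext z; simp [Set.mem_iInter]
  have h1 : IsClosed {z : Xc n | ∀ i, ‖z.1 i‖ = 1} := by
    rw [e1]
    exact isClosed_iInter fun i => isClosed_eq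
      (continuous_norm.comp ((continuous_apply i).comp continuous_fst)) continuous_const
  have h2 : IsClosed {z : Xc n | ∀ i, ‖z.2 i‖ = 1} := by
    rw [e2]
    exact isClosed_iInter fun i => isClosed_eq
      (continuous_norm.comp ((continuous_apply i).comp continuous_snd)) continuous_const
  exact h1.inter h2

lemma isCompact_KT : IsCompact (KT n) := by
  have : KT n ⊆ Metric.closedBall 0 1 := by
    intro z hz
    rw [Metric.mem_closedBall, dist_zero_right]
    rw [Prod.norm_def]
    refine max_le ?_ ?_
    · exact pi_norm_le_iff_of_nonneg zero_le_one |>.2 fun i => le_of_eq (hz.1 i)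
    · exact pi_norm_le_iff_of_nonneg zero_le_one |>.2 fun i => le_of_eq (hz.2 i)
  exact (isCompact_closedBall (0 : Xc n) 1).of_isClosed_subset isClosed_KT this

instance : CompactSpace (KT n) := isCompact_iff_compactSpace.1 isCompact_KT

def rT (z : Xc n) : Rn n × Rn n :=
  (fun i => Int.fract (Complex.arg (z.1 i) / (2 * Real.pi)),
   fun i => Int.fract (Complex.arg (z.2 i) / (2 * Real.pi)))

lemma measurable_rT : Measurable (rT (n := n)) := by
  unfold rT
  exact (measurable_pi_lambda _ fun i => ((Complex.measurable_arg.comp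
      ((measurable_pi_apply i).comp measurable_fst)).div_const _).fract).prodMk
    (measurable_pi_lambda _ fun i => ((Complex.measurable_arg.comp
      ((measurable_pi_apply i).comp measurable_snd)).div_const _).fract)

lemma fract_arg_exp (t : ℝ) (h0 : 0 ≤ t) (h1 : t < 1) :
    Int.fract (Complex.arg (Complex.exp (2 * Real.pi * I * t)) / (2 * Real.pi)) = t := by
  have h2p : (0:ℝ) < 2 * Real.pi := mul_pos two_pos Real.pi_pos
  have harg : Complex.exp (2 * Real.pi * I * t) = Complex.exp ((2 * Real.pi * t : ℝ) * I) := by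
    congr 1; push_cast; ring
  rw [harg, Complex.arg_exp_mul_I]
  have hmod : toIocMod h2p (-Real.pi) (2 * Real.pi * t)
      = 2 * Real.pi * t - toIocDiv h2p (-Real.pi) (2 * Real.pi * t) • (2 * Real.pi) := by
    have := self_sub_toIocMod h2p (-Real.pi) (2 * Real.pi * t)
    linarith [this]
  rw [hmod]
  set d : ℤ := toIocDiv h2p (-Real.pi) (2 * Real.pi * t)
  have : (2 * Real.pi * t - d • (2 * Real.pi)) / (2 * Real.pi) = t - d := by
    field_simp
    ring
  rw [this, Int.fract_sub_intCast, Int.fract_eq_self.2 ⟨h0, h1⟩]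

lemma rT_eT {p : Rn n × Rn n} (hp : p ∈ (Q n) ×ˢ (Q n)) : rT (eT p) = p := by
  obtain ⟨hp1, hp2⟩ := hp
  refine Prod.ext ?_ ?_ <;> funext i
  · exact fract_arg_exp _ (hp1 i (Set.mem_univ i)).1 (hp1 i (Set.mem_univ i)).2
  · exact fract_arg_exp _ (hp2 i (Set.mem_univ i)).1 (hp2 i (Set.mem_univ i)).2

/-! ### algebra lemmas for modFactor -/

lemma zc_add (a b : Fin n → ℤ) : zc (a + b) = zc a + zc b := by
  funext i; simp [zc]

lemma zc_neg (a : Fin n → ℤ) : zc (-a) = -zc a := by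
  funext i; simp [zc]

lemma zc_zero : zc (0 : Fin n → ℤ) = 0 := by
  funext i; simp [zc]

lemma dot_add_left (x y z : Rn n) : dot (x + y) z = dot x z + dot y z := by
  simp [dot, add_mul, Finset.sum_add_distrib]

lemma dot_add_right (x y z : Rn n) : dot x (y + z) = dot x y + dot x z := by
  simp [dot, mul_add, Finset.sum_add_distrib]

lemma dot_neg_left (x z : Rn n) : dot (-x) z = -dot x z := by
  simp [dot, Finset.sum_neg_distrib]

lemma dot_neg_right (x z : Rn n) : dot x (-z) = -dot x z := by
  simp [dot, Finset.sum_neg_distrib]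

lemma dot_zero_left (z : Rn n) : dot 0 z = 0 := by simp [dot]

lemma dot_zc_single (i : Fin n) (ξ : Rn n) : dot (zc (Pi.single i 1)) ξ = ξ i := by
  rw [dot]
  rw [Finset.sum_eq_single i]
  · simp [zc]
  · intro j _ hj
    simp [zc, Pi.single_apply, hj]
  · intro h; exact absurd (Finset.mem_univ i) h

lemma modFactor_zero_zero : modFactor (0 : Fin n → ℤ) 0 = fun _ => 1 := by
  funext p
  simp [modFactor, zc_zero, dot_zero_left]

lemma modFactor_single_fst (i : Fin n) (p : Rn n × Rn n) :
    modFactor (Pi.single i 1) (0 : Fin n → ℤ) p = Complex.exp (2 * Real.pi * I * (p.1 i)) := by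
  have h0 : dot (zc (Pi.single i (1:ℤ))) (0 : Rn n) = 0 := by simp [dot]
  rw [modFactor, zc_zero, dot_zero_left, dot_zc_single, h0]
  simp

lemma modFactor_single_snd (i : Fin n) (p : Rn n × Rn n) :
    modFactor (0 : Fin n → ℤ) (Pi.single i 1) p = Complex.exp (2 * Real.pi * I * (p.2 i)) := by
  rw [modFactor, zc_zero, dot_zero_left, dot_zc_single]
  simp [dot_zero_left]

lemma mul_modFactor (k l k' l' : Fin n → ℤ) (p : Rn n × Rn n) :
    modFactor k l p * modFactor k' l' p =
      Complex.exp (Real.pi * I * ((dot (zc k) (zc l) : ℝ) + (dot (zc k') (zc l') : ℝ)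
        - (dot (zc (k + k')) (zc (l + l')) : ℝ))) * modFactor (k + k') (l + l') p := by
  unfold modFactor
  simp only [zc_add, dot_add_left, dot_add_right]
  simp only [← Complex.exp_add]
  congr 1
  push_cast
  ring

lemma conj_modFactor (k l : Fin n → ℤ) (p : Rn n × Rn n) :
    (starRingEnd ℂ) (modFactor k l p) =
      Complex.exp (-2 * Real.pi * I * (dot (zc k) (zc l) : ℝ)) * modFactor (-k) (-l) p := by
  unfold modFactor
  rw [map_mul, ← Complex.exp_conj, ← Complex.exp_conj]
  simp only [map_mul, map_add, map_ofNat, Complex.conj_ofReal, Complex.conj_I]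
  simp only [zc_neg, dot_neg_left, dot_neg_right, neg_neg]
  simp only [← Complex.exp_add]
  congr 1
  push_cast
  ring

/-- the span of the characters, as functions. -/
def SpanS (n : ℕ) : Submodule ℂ ((Rn n × Rn n) → ℂ) :=
  Submodule.span ℂ (Set.range fun kl : (Fin n → ℤ) × (Fin n → ℤ) => modFactor kl.1 kl.2)

lemma modFactor_mem_SpanS (k l : Fin n → ℤ) : modFactor k l ∈ SpanS n :=
  Submodule.subset_span ⟨(k, l), rfl⟩

lemma one_mem_SpanS : (fun _ : Rn n × Rn n => (1:ℂ)) ∈ SpanS n := by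
  rw [← modFactor_zero_zero]; exact modFactor_mem_SpanS 0 0

lemma mul_mem_SpanS {f g : (Rn n × Rn n) → ℂ} (hf : f ∈ SpanS n) (hg : g ∈ SpanS n) :
    f * g ∈ SpanS n := by
  induction hf using Submodule.span_induction with
  | mem x hx =>
    obtain ⟨kl, rfl⟩ := hx
    induction hg using Submodule.span_induction with
    | mem y hy =>
      obtain ⟨kl', rfl⟩ := hy
      have : (modFactor kl.1 kl.2 : (Rn n × Rn n) → ℂ) * modFactor kl'.1 kl'.2 =
          Complex.exp (Real.pi * I * ((dot (zc kl.1) (zc kl.2) : ℝ) + (dot (zc kl'.1) (zc kl'.2) : ℝ)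
            - (dot (zc (kl.1 + kl'.1)) (zc (kl.2 + kl'.2)) : ℝ))) •
            modFactor (kl.1 + kl'.1) (kl.2 + kl'.2) := by
        funext p
        exact mul_modFactor kl.1 kl.2 kl'.1 kl'.2 p
      rw [this]
      exact Submodule.smul_mem _ _ (modFactor_mem_SpanS _ _)
    | zero => rw [mul_zero]; exact Submodule.zero_mem _
    | add y z _ _ hy hz => rw [mul_add]; exact Submodule.add_mem _ hy hz
    | smul c y _ hy => rw [mul_smul_comm]; exact Submodule.smul_mem _ _ hy
  | zero => rw [zero_mul]; exact Submodule.zero_mem _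
  | add x y _ _ hx hy => rw [add_mul]; exact Submodule.add_mem _ hx hy
  | smul c x _ hx => rw [smul_mul_assoc]; exact Submodule.smul_mem _ _ hx

lemma conj_mem_SpanS {f : (Rn n × Rn n) → ℂ} (hf : f ∈ SpanS n) :
    (fun p => (starRingEnd ℂ) (f p)) ∈ SpanS n := by
  induction hf using Submodule.span_induction with
  | mem x hx =>
    obtain ⟨kl, rfl⟩ := hx
    have : (fun p => (starRingEnd ℂ) (modFactor kl.1 kl.2 p)) =
        Complex.exp (-2 * Real.pi * I * (dot (zc kl.1) (zc kl.2) : ℝ)) •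
          modFactor (-kl.1) (-kl.2) := by
      funext p; exact conj_modFactor kl.1 kl.2 p
    rw [this]
    exact Submodule.smul_mem _ _ (modFactor_mem_SpanS _ _)
  | zero =>
    have : (fun p : Rn n × Rn n => (starRingEnd ℂ) ((0 : (Rn n × Rn n) → ℂ) p)) = 0 := by
      funext p; simp
    rw [this]; exact Submodule.zero_mem _
  | add x y _ _ hx hy =>
    have : (fun p => (starRingEnd ℂ) ((x + y) p)) =
        (fun p => (starRingEnd ℂ) (x p)) + fun p => (starRingEnd ℂ) (y p) := by
      funext p; simp
    rw [this]; exact Submodule.add_mem _ hx hy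
  | smul c x _ hx =>
    have : (fun p => (starRingEnd ℂ) ((c • x) p)) =
        (starRingEnd ℂ) c • fun p => (starRingEnd ℂ) (x p) := by
      funext p; simp
    rw [this]; exact Submodule.smul_mem _ _ hx

end JCL

namespace JCL
variable {n : ℕ}

def eK (p : Rn n × Rn n) : KT n := ⟨eT p, eT_mem_KT p⟩

lemma continuous_eK : Continuous (eK (n := n)) :=
  Continuous.subtype_mk continuous_eT _

def coord1 (i : Fin n) : C(KT n, ℂ) :=
  ⟨fun z => (z : Xc n).1 i,
    (continuous_apply i).comp (continuous_fst.comp continuous_subtype_val)⟩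

def coord2 (i : Fin n) : C(KT n, ℂ) :=
  ⟨fun z => (z : Xc n).2 i,
    (continuous_apply i).comp (continuous_snd.comp continuous_subtype_val)⟩

def AKT (n : ℕ) : StarSubalgebra ℂ C(KT n, ℂ) :=
  StarAlgebra.adjoin ℂ (Set.range (coord1 (n := n)) ∪ Set.range (coord2 (n := n)))

lemma AKT_separates : (AKT n).SeparatesPoints := by
  intro x y hxy
  have hval : (x : Xc n) ≠ (y : Xc n) := fun h => hxy (Subtype.ext h)
  have : (x : Xc n).1 ≠ (y : Xc n).1 ∨ (x : Xc n).2 ≠ (y : Xc n).2 := by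
    by_contra hc
    push_neg at hc
    exact hval (Prod.ext hc.1 hc.2)
  rcases this with h1 | h2
  · obtain ⟨i, hi⟩ := Function.ne_iff.1 h1
    exact ⟨coord1 i, ⟨coord1 i, StarAlgebra.subset_adjoin ℂ _ (Or.inl ⟨i, rfl⟩), rfl⟩, hi⟩
  · obtain ⟨i, hi⟩ := Function.ne_iff.1 h2
    exact ⟨coord2 i, ⟨coord2 i, StarAlgebra.subset_adjoin ℂ _ (Or.inr ⟨i, rfl⟩), rfl⟩, hi⟩

lemma pullback_mem_SpanS {P : C(KT n, ℂ)} (hP : P ∈ AKT n) :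
    (fun p => P (eK p)) ∈ SpanS n := by
  induction hP using StarAlgebra.adjoin_induction with
  | mem x hx =>
    rcases hx with ⟨i, rfl⟩ | ⟨i, rfl⟩
    · have : (fun p => (coord1 (n := n) i) (eK p)) = modFactor (Pi.single i 1) 0 := by
        funext p
        rw [modFactor_single_fst]
        rfl
      rw [this]; exact modFactor_mem_SpanS _ _
    · have : (fun p => (coord2 (n := n) i) (eK p)) = modFactor 0 (Pi.single i 1) := by
        funext p
        rw [modFactor_single_snd]
        rfl
      rw [this]; exact modFactor_mem_SpanS _ _
  | algebraMap r =>
    have : (fun p => (algebraMap ℂ C(KT n, ℂ) r) (eK p)) = r • fun _ : Rn n × Rn n => (1:ℂ) := by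
      funext p; simp [Algebra.algebraMap_eq_smul_one]
    rw [this]
    exact Submodule.smul_mem _ _ one_mem_SpanS
  | add x y hx hy ihx ihy =>
    have : (fun p => (x + y) (eK p)) = (fun p => x (eK p)) + fun p => y (eK p) := by
      funext p; simp
    rw [this]; exact Submodule.add_mem _ ihx ihy
  | mul x y hx hy ihx ihy =>
    have : (fun p => (x * y) (eK p)) = (fun p => x (eK p)) * fun p => y (eK p) := by
      funext p; simp
    rw [this]; exact mul_mem_SpanS ihx ihy
  | star x hx ih =>
    have : (fun p => (star x) (eK p)) = fun p => (starRingEnd ℂ) (x (eK p)) := by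
      funext p; simp [Complex.star_def]
    rw [this]; exact conj_mem_SpanS ih

end JCL

namespace JCL
variable {n : ℕ}

/-- coeFn of a finite Lp sum -/
lemma coeFn_finset_sum {α E : Type*} [MeasurableSpace α] {μ : Measure α}
    [NormedAddCommGroup E] {p : ENNReal} {ι : Type*} (s : Finset ι) (g : ι → Lp E p μ) :
    ⇑(∑ i ∈ s, g i) =ᵐ[μ] fun x => ∑ i ∈ s, g i x := by
  classical
  induction s using Finset.induction with
  | empty => simp only [Finset.sum_empty]; exact Lp.coeFn_zero E p μ
  | insert _ _ hnotmem ih =>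
    rename_i a s
    rw [Finset.sum_insert hnotmem]
    filter_upwards [Lp.coeFn_add (g a) (∑ i ∈ s, g i), ih] with x h1 h2
    rw [h1]
    simp only [Pi.add_apply, h2, Finset.sum_insert hnotmem]

lemma coeFn_sum_smul_chE (s : Finset ((Fin n → ℤ) × (Fin n → ℤ)))
    (c : ((Fin n → ℤ) × (Fin n → ℤ)) → ℂ) :
    ⇑(∑ kl ∈ s, c kl • chE (n := n) kl) =ᵐ[μT n]
      fun p => ∑ kl ∈ s, c kl * modFactor kl.1 kl.2 p := by
  have h1 := coeFn_finset_sum s (fun kl => c kl • chE (n := n) kl)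
  have h2 : ∀ kl : (Fin n → ℤ) × (Fin n → ℤ),
      ⇑(c kl • chE (n := n) kl) =ᵐ[μT n] fun p => c kl * modFactor kl.1 kl.2 p := by
    intro kl
    filter_upwards [Lp.coeFn_smul (c kl) (chE (n := n) kl),
      MemLp.coeFn_toLp (memℒp_modFactor (n := n) kl.1 kl.2)] with p hp1 hp2
    rw [hp1]
    simp only [Pi.smul_apply, smul_eq_mul]
    simp only [chE]
    rw [hp2]
  have h3 : ∀ᵐ p ∂(μT n), ∀ kl ∈ s, (c kl • chE (n := n) kl) p = c kl * modFactor kl.1 kl.2 p := by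
    rw [Filter.eventually_all_finset]
    intro kl _
    exact h2 kl
  filter_upwards [h1, h3] with p hp1 hp3
  rw [hp1]
  exact Finset.sum_congr rfl hp3

/-- Density of the span of characters in L²(μT). -/
lemma dense_span_chE (f : Lp ℂ 2 (μT n)) {ε : ℝ} (hε : 0 < ε) :
    ∃ y ∈ Submodule.span ℂ (Set.range (chE (n := n))), ‖f - y‖ < ε := by
  classical
  set m : Rn n × Rn n → ℂ := ⇑f with hm_def
  have hm : MemLp m 2 (μT n) := Lp.memLp f
  have hsm : StronglyMeasurable m := Lp.stronglyMeasurable f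
  set ν : Measure (Xc n) := (μT n).map eT with hν_def
  haveI : IsProbabilityMeasure ν :=
    Measure.isProbabilityMeasure_map continuous_eT.measurable.aemeasurable
  set m' : Xc n → ℂ := fun z => m (rT z) with hm'_def
  have hsm' : StronglyMeasurable m' := (hsm.measurable.comp measurable_rT).stronglyMeasurable
  have hQQ : MeasurableSet ((Q n) ×ˢ (Q n)) := measurableSet_Q.prod measurableSet_Q
  have haeQ : ∀ᵐ p ∂(μT n), p ∈ (Q n) ×ˢ (Q n) := by
    rw [μT]
    exact ae_restrict_mem hQQ
  have hae : (fun p => m' (eT p)) =ᵐ[μT n] m := by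
    filter_upwards [haeQ] with p hp
    show m (rT (eT p)) = m p
    rw [rT_eT hp]
  have hm' : MemLp m' 2 ν := by
    rw [hν_def]
    exact (memLp_map_measure_iff hsm'.aestronglyMeasurable
      continuous_eT.measurable.aemeasurable).2 (hm.ae_eq hae.symm)
  have hε3 : (0:ℝ) < ε / 3 := by linarith
  obtain ⟨gb, hgb, -⟩ := hm'.exists_boundedContinuous_eLpNorm_sub_le (by norm_num)
    (ε := ENNReal.ofReal (ε / 3)) (ENNReal.ofReal_pos.2 hε3).ne'
  -- Stone-Weierstrass
  have hA := ContinuousMap.starSubalgebra_topologicalClosure_eq_top_of_separatesPoints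
    (AKT n) AKT_separates
  set F : C(KT n, ℂ) := ⟨fun z => gb (z : Xc n), gb.continuous.comp continuous_subtype_val⟩
    with hF_def
  have hFmem : F ∈ closure ((AKT n) : Set C(KT n, ℂ)) := by
    have : F ∈ (AKT n).topologicalClosure := by
      rw [hA]; exact StarSubalgebra.mem_top
    rwa [← StarSubalgebra.topologicalClosure_coe]
  obtain ⟨P, hPA, hPF⟩ := Metric.mem_closure_iff.1 hFmem (ε / 3) hε3
  set Pe : Rn n × Rn n → ℂ := fun p => P (eK p) with hPe_def
  have hPspan : Pe ∈ SpanS n := pullback_mem_SpanS hPA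
  rw [SpanS] at hPspan
  obtain ⟨c, hc⟩ := Finsupp.mem_span_range_iff_exists_finsupp.1 hPspan
  refine ⟨∑ kl ∈ c.support, c kl • chE (n := n) kl, ?_, ?_⟩
  · exact Submodule.sum_mem _ fun kl _ =>
      Submodule.smul_mem _ _ (Submodule.subset_span ⟨kl, rfl⟩)
  · -- the norm estimate
    set y : Lp ℂ 2 (μT n) := ∑ kl ∈ c.support, c kl • chE (n := n) kl with hy_def
    have hycoe : ⇑y =ᵐ[μT n] Pe := by
      have h1 := coeFn_sum_smul_chE c.support c
      have h2 : (fun p => ∑ kl ∈ c.support, c kl * modFactor kl.1 kl.2 p) = Pe := by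
        rw [← hc]
        funext p
        rw [Finsupp.sum]
        simp only [Finset.sum_apply, Pi.smul_apply, smul_eq_mul]
      rw [← h2]
      exact h1
    have hcoe_sub : ⇑(f - y) =ᵐ[μT n] fun p => m p - Pe p := by
      filter_upwards [Lp.coeFn_sub f y, hycoe] with p hp1 hp2
      rw [hp1]
      simp only [Pi.sub_apply, hp2, hm_def]
    rw [Lp.norm_def, eLpNorm_congr_ae hcoe_sub]
    -- split into two terms
    set u : Rn n × Rn n → ℂ := fun p => m p - gb (eT p) with hu_def
    set v : Rn n × Rn n → ℂ := fun p => gb (eT p) - Pe p with hv_def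
    have hsplit : (fun p => m p - Pe p) = u + v := by
      funext p; simp only [hu_def, hv_def, Pi.add_apply]; ring
    have hu_asm : AEStronglyMeasurable u (μT n) :=
      hm.aestronglyMeasurable.sub ((gb.continuous.comp continuous_eT).aestronglyMeasurable)
    have hPe_cont : Continuous Pe := P.continuous.comp continuous_eK
    have hv_asm : AEStronglyMeasurable v (μT n) :=
      ((gb.continuous.comp continuous_eT).aestronglyMeasurable).sub hPe_cont.aestronglyMeasurable
    have htri : eLpNorm (fun p => m p - Pe p) 2 (μT n) ≤
        eLpNorm u 2 (μT n) + eLpNorm v 2 (μT n) := by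
      rw [hsplit]
      exact eLpNorm_add_le hu_asm hv_asm one_le_two
    -- first term
    have hu_bound : eLpNorm u 2 (μT n) ≤ ENNReal.ofReal (ε / 3) := by
      have he1 : u =ᵐ[μT n] (fun z => m' z - gb z) ∘ eT := by
        filter_upwards [hae] with p hp
        show m p - gb (eT p) = m' (eT p) - gb (eT p)
        rw [hp]
      rw [eLpNorm_congr_ae he1]
      have := eLpNorm_map_measure (μ := μT n) (f := eT) (p := (2:ENNReal))
        (g := fun z => m' z - gb z)
        (hm'.aestronglyMeasurable.sub gb.continuous.aestronglyMeasurable)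
        continuous_eT.measurable.aemeasurable
      rw [← hν_def] at this
      rw [← this]
      exact hgb
    -- second term
    have hv_bound : eLpNorm v 2 (μT n) ≤ ENNReal.ofReal (ε / 3) := by
      have hvpt : ∀ p : Rn n × Rn n, ‖v p‖ ≤ ε / 3 := by
        intro p
        have h1 : v p = F (eK p) - P (eK p) := rfl
        rw [h1]
        have := ContinuousMap.dist_apply_le_dist (f := F) (g := P) (eK p)
        rw [dist_eq_norm] at this
        calc ‖F (eK p) - P (eK p)‖ ≤ dist F P := this
        _ ≤ ε / 3 := le_of_lt hPF
      have := eLpNorm_le_of_ae_bound (μ := μT n) (p := (2:ENNReal)) (f := v)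
        (Filter.Eventually.of_forall hvpt)
      simpa using this
    have htot : eLpNorm (fun p => m p - Pe p) 2 (μT n) ≤ ENNReal.ofReal (2 * ε / 3) := by
      refine le_trans htri (le_trans (add_le_add hu_bound hv_bound) ?_)
      rw [← ENNReal.ofReal_add (by linarith) (by linarith)]
      exact ENNReal.ofReal_le_ofReal (by linarith)
    have := ENNReal.toReal_le_of_le_ofReal (by linarith) htot
    linarith

end JCL

namespace JCL
variable {n : ℕ}

abbrev Idx (n : ℕ) := (Fin n → ℤ) × (Fin n → ℤ)

section main
variable (Tt : (Fin n → ℤ) → (Fin n → ℤ) → H n →L[ℂ] H n)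

/-- linear combination of twisted translates of ψ with finsupp coefficients -/
def THs (ψ : H n) (c : Idx n →₀ ℂ) : H n := c.sum fun kl a => a • Tt kl.1 kl.2 ψ

/-- the corresponding element of L²(μT). -/
def Qs (c : Idx n →₀ ℂ) : Lp ℂ 2 (μT n) := c.sum fun kl a => a • chE kl

/-- the corresponding trig polynomial. -/
def qFs (c : Idx n →₀ ℂ) : Rn n × Rn n → ℂ :=
  fun p => ∑ kl ∈ c.support, c kl * modFactor kl.1 kl.2 p

lemma THs_eq (ψ : H n) (c : Idx n →₀ ℂ) :
    THs Tt ψ c = ∑ kl ∈ c.support, c kl • Tt kl.1 kl.2 ψ := rfl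

lemma Qs_eq (c : Idx n →₀ ℂ) : Qs (n := n) c = ∑ kl ∈ c.support, c kl • chE kl := rfl

lemma THs_sub (ψ : H n) (c c' : Idx n →₀ ℂ) :
    THs Tt ψ (c - c') = THs Tt ψ c - THs Tt ψ c' := by
  unfold THs
  rw [Finsupp.sum_sub_index]
  intro kl b1 b2
  rw [sub_smul]

lemma Qs_sub (c c' : Idx n →₀ ℂ) : Qs (n := n) (c - c') = Qs c - Qs c' := by
  unfold Qs
  rw [Finsupp.sum_sub_index]
  intro kl b1 b2
  rw [sub_smul]

lemma coeFn_Qs (c : Idx n →₀ ℂ) : ⇑(Qs (n := n) c) =ᵐ[μT n] qFs c :=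
  coeFn_sum_smul_chE c.support c

lemma norm_Qs_sq (c : Idx n →₀ ℂ) :
    ‖Qs (n := n) c‖ ^ 2 = ∑ kl ∈ c.support, ‖c kl‖ ^ 2 := by
  have h1 : (inner ℂ (Qs (n := n) c) (Qs (n := n) c) : ℂ) =
      ∑ kl ∈ c.support, (starRingEnd ℂ) (c kl) * c kl := by
    rw [Qs_eq]
    exact orthonormal_chE.inner_sum c c c.support
  have h2 : ‖Qs (n := n) c‖ ^ 2 = RCLike.re (inner ℂ (Qs (n := n) c) (Qs (n := n) c) : ℂ) :=
    (inner_self_eq_norm_sq _).symm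
  rw [h2, h1, map_sum]
  refine Finset.sum_congr rfl fun kl _ => ?_
  rw [RCLike.conj_mul]
  norm_cast

variable (φ : H n)

lemma norm_THs_le (hφP : IsParsevalGen Tt φ)
    (hmem : ∀ kl : Idx n, Tt kl.1 kl.2 φ ∈ Vt Tt φ) (c : Idx n →₀ ℂ) :
    ‖THs Tt φ c‖ ≤ ‖Qs (n := n) c‖ := by
  set x := THs Tt φ c with hx_def
  have hx_eq : x = ∑ kl ∈ c.support, c kl • Tt kl.1 kl.2 φ := rfl
  have hxV : x ∈ Vt Tt φ := by
    rw [hx_eq]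
    exact Submodule.sum_mem _ fun kl _ => Submodule.smul_mem _ _ (hmem kl)
  have hP := hφP x hxV
  set w : Idx n → ℝ := fun kl => ‖(inner ℂ x (Tt kl.1 kl.2 φ) : ℂ)‖ with hw_def
  have hsum_le : ∑ kl ∈ c.support, w kl ^ 2 ≤ ‖x‖ ^ 2 := by
    by_cases hs : Summable (fun kl => w kl ^ 2)
    · rw [← hP]
      exact Summable.sum_le_tsum _ (fun kl _ => sq_nonneg _) hs
    · have h0 : ‖x‖ ^ 2 = 0 := by rw [← hP, tsum_eq_zero_of_not_summable hs]
      have hx0 : x = 0 := by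
        have := pow_eq_zero_iff (n := 2) (by norm_num) |>.1 h0
        exact norm_eq_zero.1 this
      have : ∀ kl, w kl = 0 := by
        intro kl
        rw [hw_def]
        simp [hx0]
      simp [this, h0]
  have hinner : (inner ℂ x x : ℂ) = ∑ kl ∈ c.support, c kl * (inner ℂ x (Tt kl.1 kl.2 φ) : ℂ) := by
    nth_rewrite 2 [hx_eq]
    rw [inner_sum]
    exact Finset.sum_congr rfl fun kl _ => inner_smul_right _ _ _
  have h1 : ‖x‖ ^ 2 = RCLike.re (inner ℂ x x : ℂ) := (inner_self_eq_norm_sq x).symm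
  have h2 : RCLike.re (inner ℂ x x : ℂ) ≤ ∑ kl ∈ c.support, ‖c kl‖ * w kl := by
    rw [hinner]
    refine le_trans (RCLike.re_le_norm _) (le_trans (norm_sum_le _ _) ?_)
    refine le_of_eq (Finset.sum_congr rfl fun kl _ => ?_)
    rw [norm_mul]
  have h3 : (∑ kl ∈ c.support, ‖c kl‖ * w kl) ^ 2 ≤
      (∑ kl ∈ c.support, ‖c kl‖ ^ 2) * (∑ kl ∈ c.support, w kl ^ 2) :=
    Finset.sum_mul_sq_le_sq_mul_sq _ _ _
  have hB2 : ‖Qs (n := n) c‖ ^ 2 = ∑ kl ∈ c.support, ‖c kl‖ ^ 2 := norm_Qs_sq c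
  by_cases hA : ‖x‖ = 0
  · rw [hA]; exact norm_nonneg _
  · have hApos : 0 < ‖x‖ := lt_of_le_of_ne (norm_nonneg _) (Ne.symm hA)
    have h4 : ‖x‖ ^ 2 ≤ ∑ kl ∈ c.support, ‖c kl‖ * w kl := h1 ▸ h2
    have h5 : (‖x‖ ^ 2) ^ 2 ≤ (∑ kl ∈ c.support, ‖c kl‖ * w kl) ^ 2 := by
      refine pow_le_pow_left₀ (sq_nonneg _) h4 2
    have h6 : (‖x‖ ^ 2) ^ 2 ≤ ‖Qs (n := n) c‖ ^ 2 * ‖x‖ ^ 2 := by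
      calc (‖x‖ ^ 2) ^ 2 ≤ (∑ kl ∈ c.support, ‖c kl‖ ^ 2) * (∑ kl ∈ c.support, w kl ^ 2) :=
            le_trans h5 h3
        _ ≤ (∑ kl ∈ c.support, ‖c kl‖ ^ 2) * ‖x‖ ^ 2 := by
            refine mul_le_mul_of_nonneg_left hsum_le ?_
            exact Finset.sum_nonneg fun kl _ => sq_nonneg _
        _ = ‖Qs (n := n) c‖ ^ 2 * ‖x‖ ^ 2 := by rw [hB2]
    have hA2 : 0 < ‖x‖ ^ 2 := pow_pos hApos 2
    have h6' : ‖x‖ ^ 2 * ‖x‖ ^ 2 ≤ ‖Qs (n := n) c‖ ^ 2 * ‖x‖ ^ 2 := by nlinarith [h6]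
    have h7 : ‖x‖ ^ 2 ≤ ‖Qs (n := n) c‖ ^ 2 := le_of_mul_le_mul_right h6' hA2
    nlinarith [h7, hApos, norm_nonneg (Qs (n := n) c)]

end main
end JCL

namespace JCL
variable {n : ℕ}

section main2
variable {Tt : (Fin n → ℤ) → (Fin n → ℤ) → H n →L[ℂ] H n} {J : H n ≃ₗᵢ[ℂ] HT n}

/-- image under J of a twisted-translate combination -/
lemma coeJ_THs (hJ : IsZakIsom Tt J) (ψ : H n) (c : Idx n →₀ ℂ) :
    (J (THs Tt ψ c) : Rn n × Rn n → L2Rn n) =ᵐ[μT n]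
      fun p => qFs c p • (J ψ : Rn n × Rn n → L2Rn n) p := by
  have hmap : J (THs Tt ψ c) = ∑ kl ∈ c.support, c kl • J (Tt kl.1 kl.2 ψ) := by
    rw [THs_eq, map_sum]
    exact Finset.sum_congr rfl fun kl _ => map_smul _ _ _
  rw [hmap]
  have h1 := coeFn_finset_sum (μ := μT n) c.support
    (fun kl => c kl • J (Tt kl.1 kl.2 ψ))
  have h2 : ∀ᵐ p ∂(μT n), ∀ kl ∈ c.support,
      (c kl • J (Tt kl.1 kl.2 ψ) : HT n) p = c kl • modFactor kl.1 kl.2 p •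
        (J ψ : Rn n × Rn n → L2Rn n) p := by
    rw [Filter.eventually_all_finset]
    intro kl _
    filter_upwards [Lp.coeFn_smul (c kl) (J (Tt kl.1 kl.2 ψ)), hJ kl.1 kl.2 ψ] with p hp1 hp2
    rw [hp1]
    simp only [Pi.smul_apply]
    rw [hp2]
  filter_upwards [h1, h2] with p hp1 hp2
  rw [hp1]
  have : ∑ kl ∈ c.support, (c kl • J (Tt kl.1 kl.2 ψ) : HT n) p =
      ∑ kl ∈ c.support, (c kl * modFactor kl.1 kl.2 p) • (J ψ : Rn n × Rn n → L2Rn n) p := by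
    refine Finset.sum_congr rfl fun kl hkl => ?_
    rw [hp2 kl hkl, smul_smul]
  rw [this, ← Finset.sum_smul]
  rfl

/-- subsequence along which Lp convergence upgrades to a.e. convergence -/
lemma exists_subseq_ae {E' : Type*} [NormedAddCommGroup E'] {u : ℕ → Lp E' 2 (μT n)}
    {L : Lp E' 2 (μT n)} (hu : Filter.Tendsto u Filter.atTop (nhds L)) :
    ∃ ns : ℕ → ℕ, StrictMono ns ∧ ∀ᵐ p ∂(μT n),
      Filter.Tendsto (fun k => (u (ns k) : Rn n × Rn n → E') p) Filter.atTop
        (nhds ((L : Rn n × Rn n → E') p)) :=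
  (tendstoInMeasure_of_tendsto_Lp hu).exists_seq_tendsto_ae

end main2
end JCL

end JCLaux

open Filter

/-- 𝒥-commutation lemma, (𝒥∘U∘𝒥⁻¹)(m·𝒥φ) = m·(𝒥∘U)φ a.e. -/
theorem J_commutation_lemma (n : ℕ)
    (Tt : (Fin n → ℤ) → (Fin n → ℤ) → H n →L[ℂ] H n) (hTt : IsTTF Tt)
    (J : H n ≃ₗᵢ[ℂ] HT n) (hJ : IsZakIsom Tt J)
    (φ : H n) (hφP : IsParsevalGen Tt φ) (hφmem : φ ∈ Vt Tt φ)
    (hinv : ∀ (k l : Fin n → ℤ), ∀ f ∈ Vt Tt φ, Tt k l f ∈ Vt Tt φ)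
    (U : ↥(Vt Tt φ) →L[ℂ] H n)
    (hU : ∀ (k l : Fin n → ℤ) (f : ↥(Vt Tt φ)),
      U ⟨Tt k l ↑f, hinv k l ↑f f.2⟩ = Tt k l (U f))
    (m : Rn n × Rn n → ℂ) (hm : MemLp m 2 (μT n))
    (g : ↥(Vt Tt φ))
    (hg : (J ↑g : Rn n × Rn n → L2Rn n) =ᵐ[μT n]
      fun p => m p • (J ↑φ : Rn n × Rn n → L2Rn n) p) :
    (J (U g) : Rn n × Rn n → L2Rn n) =ᵐ[μT n]
      fun p => m p • (J (U ⟨φ, hφmem⟩) : Rn n × Rn n → L2Rn n) p := by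
  classical
  set φ₀ : ↥(Vt Tt φ) := ⟨φ, hφmem⟩ with hφ₀
  have hmemT : ∀ kl : JCL.Idx n, Tt kl.1 kl.2 φ ∈ Vt Tt φ := fun kl => hinv _ _ φ hφmem
  set M : Lp ℂ 2 (μT n) := hm.toLp m with hM
  have hex : ∀ j : ℕ, ∃ c : JCL.Idx n →₀ ℂ, ‖M - JCL.Qs c‖ < 1 / ((j:ℝ) + 1) := by
    intro j
    obtain ⟨y, hy_mem, hy⟩ := JCL.dense_span_chE M (by positivity : (0:ℝ) < 1 / ((j:ℝ) + 1))
    obtain ⟨c, hc⟩ := Finsupp.mem_span_range_iff_exists_finsupp.1 hy_mem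
    exact ⟨c, by rw [show JCL.Qs c = y from hc]; exact hy⟩
  choose cs hcs using hex
  set Y : ℕ → Lp ℂ 2 (μT n) := fun j => JCL.Qs (cs j) with hY
  set F : ℕ → H n := fun j => JCL.THs Tt φ (cs j) with hF
  set G : ℕ → H n := fun j => JCL.THs Tt (U φ₀) (cs j) with hG
  have hYM : Tendsto Y atTop (nhds M) := by
    rw [tendsto_iff_dist_tendsto_zero]
    refine squeeze_zero (fun j => dist_nonneg) (fun j => ?_)
      tendsto_one_div_add_atTop_nhds_zero_nat
    calc dist (Y j) M = ‖M - Y j‖ := by rw [dist_eq_norm, norm_sub_rev]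
      _ ≤ 1 / ((j:ℝ) + 1) := le_of_lt (hcs j)
  have hFV : ∀ j, F j ∈ Vt Tt φ := by
    intro j
    show JCL.THs Tt φ (cs j) ∈ Vt Tt φ
    rw [JCL.THs_eq]
    exact Submodule.sum_mem _ fun kl _ => Submodule.smul_mem _ _ (hmemT kl)
  have hFb : ∀ i j, ‖F i - F j‖ ≤ ‖Y i - Y j‖ := by
    intro i j
    rw [hF, hY, ← JCL.THs_sub, ← JCL.Qs_sub]
    exact JCL.norm_THs_le Tt φ hφP hmemT _
  have hYc : CauchySeq Y := hYM.cauchySeq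
  have hFc : CauchySeq F := by
    rw [Metric.cauchySeq_iff] at hYc ⊢
    intro ε hε
    obtain ⟨N, hN⟩ := hYc ε hε
    refine ⟨N, fun i hi j hj => ?_⟩
    have h1 := hN i hi j hj
    rw [dist_eq_norm] at h1 ⊢
    exact lt_of_le_of_lt (hFb i j) h1
  obtain ⟨x, hx⟩ := cauchySeq_tendsto_of_complete hFc
  have hclosed : IsClosed ((Vt Tt φ : Submodule ℂ (H n)) : Set (H n)) :=
    Submodule.isClosed_topologicalClosure _
  have hxV : x ∈ Vt Tt φ := hclosed.mem_of_tendsto hx (Eventually.of_forall hFV)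
  have hJF : Tendsto (fun j => J (F j)) atTop (nhds (J x)) :=
    (J.continuous.tendsto x).comp hx
  obtain ⟨ns1, hns1, hae1⟩ := JCL.exists_subseq_ae hJF
  have hYM1 : Tendsto (fun k => Y (ns1 k)) atTop (nhds M) := hYM.comp hns1.tendsto_atTop
  obtain ⟨ns2, hns2, hae2⟩ := JCL.exists_subseq_ae hYM1
  have haeJ : ∀ᵐ p ∂(μT n), ∀ j : ℕ,
      (J (F j) : Rn n × Rn n → L2Rn n) p = JCL.qFs (cs j) p • (J φ : Rn n × Rn n → L2Rn n) p := by
    rw [MeasureTheory.ae_all_iff]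
    intro j
    exact JCL.coeJ_THs hJ φ (cs j)
  have haeY : ∀ᵐ p ∂(μT n), ∀ j : ℕ, (Y j : Rn n × Rn n → ℂ) p = JCL.qFs (cs j) p := by
    rw [MeasureTheory.ae_all_iff]
    intro j
    exact JCL.coeFn_Qs (cs j)
  have haeM : (M : Rn n × Rn n → ℂ) =ᵐ[μT n] m := hm.coeFn_toLp
  have hxg : (J x : Rn n × Rn n → L2Rn n) =ᵐ[μT n]
      fun p => m p • (J ↑φ : Rn n × Rn n → L2Rn n) p := by
    filter_upwards [hae1, hae2, haeJ, haeY, haeM] with p h1 h2 h3 h4 h5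
    have hs1 : Tendsto (fun t => (J (F (ns1 (ns2 t))) : Rn n × Rn n → L2Rn n) p) atTop
        (nhds ((J x : Rn n × Rn n → L2Rn n) p)) := h1.comp hns2.tendsto_atTop
    have hq : Tendsto (fun t => JCL.qFs (cs (ns1 (ns2 t))) p) atTop (nhds (m p)) := by
      rw [h5] at h2
      exact h2.congr fun t => h4 (ns1 (ns2 t))
    have hs2 : Tendsto (fun t => (J (F (ns1 (ns2 t))) : Rn n × Rn n → L2Rn n) p) atTop
        (nhds (m p • (J ↑φ : Rn n × Rn n → L2Rn n) p)) := by
      have heq : (fun t => (J (F (ns1 (ns2 t))) : Rn n × Rn n → L2Rn n) p) =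
          fun t => JCL.qFs (cs (ns1 (ns2 t))) p • (J ↑φ : Rn n × Rn n → L2Rn n) p :=
        funext fun t => h3 _
      rw [heq]
      exact hq.smul_const _
    exact tendsto_nhds_unique hs1 hs2
  have hJxg : J x = J ↑g := Lp.ext (hxg.trans hg.symm)
  have hxg' : x = (↑g : H n) := J.injective hJxg
  have hFVt : Tendsto (fun j => (⟨F j, hFV j⟩ : ↥(Vt Tt φ))) atTop (nhds g) := by
    rw [tendsto_subtype_rng]
    exact hxg' ▸ hx
  have hUF : Tendsto (fun j => U ⟨F j, hFV j⟩) atTop (nhds (U g)) :=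
    (U.continuous.tendsto g).comp hFVt
  have hUFG : ∀ j, U ⟨F j, hFV j⟩ = G j := by
    intro j
    have hsub : (⟨F j, hFV j⟩ : ↥(Vt Tt φ)) =
        ∑ kl ∈ (cs j).support, cs j kl • (⟨Tt kl.1 kl.2 φ, hmemT kl⟩ : ↥(Vt Tt φ)) := by
      apply Subtype.ext
      show JCL.THs Tt φ (cs j) = _
      rw [JCL.THs_eq]
      simp
    rw [hsub, map_sum]
    show _ = JCL.THs Tt (U φ₀) (cs j)
    rw [JCL.THs_eq]
    refine Finset.sum_congr rfl fun kl _ => ?_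
    rw [_root_.map_smul]
    congr 1
    exact hU kl.1 kl.2 φ₀
  have hJG : Tendsto (fun j => J (G j)) atTop (nhds (J (U g))) := by
    have heq : (fun j => J (G j)) = fun j => J (U ⟨F j, hFV j⟩) :=
      funext fun j => by rw [hUFG j]
    rw [heq]
    exact (J.continuous.tendsto _).comp hUF
  have hJG' : Tendsto (fun t => J (G (ns1 (ns2 t)))) atTop (nhds (J (U g))) :=
    hJG.comp ((hns1.comp hns2).tendsto_atTop)
  obtain ⟨ns3, hns3, hae3⟩ := JCL.exists_subseq_ae hJG'
  have haeG : ∀ᵐ p ∂(μT n), ∀ j : ℕ,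
      (J (G j) : Rn n × Rn n → L2Rn n) p =
        JCL.qFs (cs j) p • (J (U φ₀) : Rn n × Rn n → L2Rn n) p := by
    rw [MeasureTheory.ae_all_iff]
    intro j
    exact JCL.coeJ_THs hJ (U φ₀) (cs j)
  filter_upwards [hae3, haeG, hae2, haeY, haeM] with p h3' hG' h2 h4 h5
  have hq : Tendsto (fun t => JCL.qFs (cs (ns1 (ns2 t))) p) atTop (nhds (m p)) := by
    rw [h5] at h2
    exact h2.congr fun t => h4 (ns1 (ns2 t))
  have hq3 : Tendsto (fun k => JCL.qFs (cs (ns1 (ns2 (ns3 k)))) p) atTop (nhds (m p)) :=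
    hq.comp hns3.tendsto_atTop
  have hlim2 : Tendsto (fun k => (J (G (ns1 (ns2 (ns3 k)))) : Rn n × Rn n → L2Rn n) p) atTop
      (nhds (m p • (J (U φ₀) : Rn n × Rn n → L2Rn n) p)) := by
    have heq : (fun k => (J (G (ns1 (ns2 (ns3 k)))) : Rn n × Rn n → L2Rn n) p) =
        fun k => JCL.qFs (cs (ns1 (ns2 (ns3 k)))) p • (J (U φ₀) : Rn n × Rn n → L2Rn n) p :=
      funext fun k => hG' _
    rw [heq]
    exact hq3.smul_const _
  exact tendsto_nhds_unique h3' hlim2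

end
end
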